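/- arXiv:2604.06136 — 4 statements merged into one kernel-verified Lean document; each statement's English description precedes it below -/
import Mathlib

section
/- Let m : ℝ → ℝ be an even, positive, continuous function that is non-increasing on [0,∞). If ∫₁^∞ (log⁻ m(t))/t² dt = ∞, then there exists a tame function m⁺ : ℝ → ℝ with m⁺(x) ≥ m(x) for all x ∈ ℝ and ∫₁^∞ (log⁻ m⁺(t))/t² dt = ∞. -/
open MeasureTheory Filter Topology

/-- `log⁻ t = max (−log t) 0`. -/
noncomputable def negLog (t : ℝ) : ℝ := max (-Real.log t) 0

/-- A function `m : ℝ → ℝ` is tame if it is even, positive, non-increasing on `[0, ∞)`,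
`C²`-smooth, satisfies `m(x) → 0`, `x·m'(x) → 0`, `x²·m''(x) → 0` as `|x| → ∞`,
is constant on `[−1, 1]` and constant on `{x : 2^k − 2^(k−3) ≤ |x| ≤ 2^k + 2^(k−2)}`
for every `k ≥ 3`. -/
def Tame (m : ℝ → ℝ) : Prop :=
  (∀ x, m (-x) = m x) ∧ (∀ x, 0 < m x) ∧ AntitoneOn m (Set.Ici 0) ∧
  ContDiff ℝ 2 m ∧
  Tendsto m (cocompact ℝ) (𝓝 0) ∧
  Tendsto (fun x => x * deriv m x) (cocompact ℝ) (𝓝 0) ∧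
  Tendsto (fun x => x ^ 2 * deriv (deriv m) x) (cocompact ℝ) (𝓝 0) ∧
  (∃ c : ℝ, ∀ x : ℝ, |x| ≤ 1 → m x = c) ∧
  (∀ k : ℕ, 3 ≤ k → ∃ c : ℝ, ∀ x : ℝ,
    (2 : ℝ) ^ k - 2 ^ (k - 3) ≤ |x| → |x| ≤ (2 : ℝ) ^ k + 2 ^ (k - 2) → m x = c)

namespace S3aux
open Set
open scoped ENNReal NNReal

local notation "φ" => Real.smoothTransition

/-! ### Facts about the smooth transition function -/

lemma expNegInvGlue_mono : Monotone expNegInvGlue := by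
  intro x y hxy
  rcases le_or_gt x 0 with h | h
  · rw [expNegInvGlue.zero_of_nonpos h]; exact expNegInvGlue.nonneg y
  · have hy : 0 < y := lt_of_lt_of_le h hxy
    unfold expNegInvGlue
    rw [if_neg (not_le.2 h), if_neg (not_le.2 hy)]
    exact Real.exp_le_exp.2 (by simpa using inv_anti₀ h hxy)

lemma st_mono : Monotone φ := by
  intro x y hxy
  rcases le_or_gt x 0 with h | h
  · rw [Real.smoothTransition.zero_of_nonpos h]; exact Real.smoothTransition.nonneg y
  · have hy : 0 < y := lt_of_lt_of_le h hxy
    unfold Real.smoothTransition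
    rw [div_le_div_iff₀ (Real.smoothTransition.pos_denom x) (Real.smoothTransition.pos_denom y)]
    have h1 : expNegInvGlue x ≤ expNegInvGlue y := expNegInvGlue_mono hxy
    have h2 : expNegInvGlue (1 - y) ≤ expNegInvGlue (1 - x) :=
      expNegInvGlue_mono (by linarith)
    nlinarith [expNegInvGlue.nonneg x, expNegInvGlue.nonneg (1 - y)]

lemma st_contDiff : ContDiff ℝ (⊤ : ℕ∞) φ := Real.smoothTransition.contDiff

lemma st_contDiff2 : ContDiff ℝ 2 φ := by
  exact_mod_cast Real.smoothTransition.contDiff (n := 2)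

lemma st_diff : Differentiable ℝ φ := st_contDiff.differentiable (by simp)

lemma deriv_st_contDiff : ContDiff ℝ (⊤ : ℕ∞) (deriv φ) :=
  (contDiff_infty_iff_deriv.mp st_contDiff).2

lemma deriv_st_diff : Differentiable ℝ (deriv φ) :=
  deriv_st_contDiff.differentiable (by simp)

lemma deriv_st_eq_zero {t : ℝ} (h : t < 0 ∨ 1 < t) : deriv φ t = 0 := by
  rcases h with h | h
  · have hev : φ =ᶠ[𝓝 t] (fun _ => (0 : ℝ)) :=
      eventually_of_mem (Iio_mem_nhds h) (fun s hs =>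
        Real.smoothTransition.zero_of_nonpos (le_of_lt hs))
    rw [hev.deriv_eq, deriv_const]
  · have hev : φ =ᶠ[𝓝 t] (fun _ => (1 : ℝ)) :=
      eventually_of_mem (Ioi_mem_nhds h) (fun s hs =>
        Real.smoothTransition.one_of_one_le (le_of_lt hs))
    rw [hev.deriv_eq, deriv_const]

lemma deriv2_st_eq_zero {t : ℝ} (h : t < 0 ∨ 1 < t) : deriv (deriv φ) t = 0 := by
  rcases h with h | h
  · have hev : deriv φ =ᶠ[𝓝 t] (fun _ => (0 : ℝ)) :=
      eventually_of_mem (Iio_mem_nhds h) (fun s hs => deriv_st_eq_zero (Or.inl hs))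
    rw [hev.deriv_eq, deriv_const]
  · have hev : deriv φ =ᶠ[𝓝 t] (fun _ => (0 : ℝ)) :=
      eventually_of_mem (Ioi_mem_nhds h) (fun s hs => deriv_st_eq_zero (Or.inr hs))
    rw [hev.deriv_eq, deriv_const]

lemma exists_bound_of_zero_outside {f : ℝ → ℝ} (hc : Continuous f)
    (hz : ∀ t : ℝ, t < 0 ∨ 1 < t → f t = 0) :
    ∃ B : ℝ, 0 ≤ B ∧ ∀ t, |f t| ≤ B := by
  obtain ⟨C, hC⟩ := isCompact_Icc.exists_bound_of_continuousOn
    (hc.continuousOn : ContinuousOn f (Icc (0:ℝ) 1))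
  refine ⟨max C 0, le_max_right _ _, fun t => ?_⟩
  by_cases ht : t ∈ Icc (0:ℝ) 1
  · exact le_trans (hC t ht) (le_max_left _ _)
  · have : t < 0 ∨ 1 < t := by
      simp only [mem_Icc, not_and_or, not_le] at ht; tauto
    rw [hz t this, abs_zero]; exact le_max_right _ _

lemma exists_B1 : ∃ B : ℝ, 0 ≤ B ∧ ∀ t, |deriv φ t| ≤ B :=
  exists_bound_of_zero_outside deriv_st_contDiff.continuous (fun _ => deriv_st_eq_zero)

lemma exists_B2 : ∃ B : ℝ, 0 ≤ B ∧ ∀ t, |deriv (deriv φ) t| ≤ B :=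
  exists_bound_of_zero_outside (contDiff_infty_iff_deriv.mp deriv_st_contDiff).2.continuous
    (fun _ => deriv2_st_eq_zero)

/-! ### The bump functions -/

noncomputable def inn (n : ℕ) (x : ℝ) : ℝ := (x ^ 2 - 100 * 4 ^ n) / (96 * 4 ^ n)

noncomputable def psi (n : ℕ) (x : ℝ) : ℝ := 1 - φ (inn n x)

lemma four_pow (n : ℕ) : (4 : ℝ) ^ n = ((2:ℝ) ^ n) ^ 2 := by
  rw [← pow_mul, mul_comm n 2, pow_mul]; norm_num

lemma psi_nonneg (n : ℕ) (x : ℝ) : 0 ≤ psi n x := by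
  have := Real.smoothTransition.le_one (inn n x); unfold psi; linarith

lemma psi_le_one (n : ℕ) (x : ℝ) : psi n x ≤ 1 := by
  have := Real.smoothTransition.nonneg (inn n x); unfold psi; linarith

lemma psi_eq_one {n : ℕ} {x : ℝ} (h : |x| ≤ 10 * 2 ^ n) : psi n x = 1 := by
  have hx2 : x ^ 2 ≤ 100 * 4 ^ n := by
    rw [four_pow]
    calc x ^ 2 = |x| ^ 2 := (sq_abs x).symm
    _ ≤ (10 * 2 ^ n) ^ 2 := by
        apply pow_le_pow_left₀ (abs_nonneg x) h
    _ = 100 * ((2:ℝ) ^ n) ^ 2 := by ring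
  have harg : inn n x ≤ 0 :=
    div_nonpos_of_nonpos_of_nonneg (by linarith) (by positivity)
  unfold psi
  rw [Real.smoothTransition.zero_of_nonpos harg]; ring

lemma psi_eq_zero {n : ℕ} {x : ℝ} (h : 14 * 2 ^ n ≤ |x|) : psi n x = 0 := by
  have hx2 : 196 * 4 ^ n ≤ x ^ 2 := by
    rw [four_pow]
    calc (196:ℝ) * ((2:ℝ)^n)^2 = (14 * 2 ^ n) ^ 2 := by ring
    _ ≤ |x| ^ 2 := by
        apply pow_le_pow_left₀ (by positivity) h
    _ = x ^ 2 := sq_abs x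
  have harg : 1 ≤ inn n x := by
    unfold inn
    rw [le_div_iff₀ (by positivity : (0:ℝ) < 96 * 4 ^ n)]; linarith
  unfold psi
  rw [Real.smoothTransition.one_of_one_le harg]; ring

lemma psi_anti (n : ℕ) : AntitoneOn (psi n) (Ici (0:ℝ)) := by
  intro a ha b hb hab
  unfold psi
  have h1 : inn n a ≤ inn n b := by
    unfold inn
    have : a ^ 2 ≤ b ^ 2 := by
      apply pow_le_pow_left₀ ha hab
    gcongr
  linarith [st_mono h1]

lemma psi_contDiff (n : ℕ) : ContDiff ℝ 2 (psi n) := by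
  have h1 : ContDiff ℝ 2 (inn n) := by
    apply ContDiff.div_const
    exact (contDiff_id.pow 2).sub contDiff_const
  exact contDiff_const.sub (st_contDiff2.comp h1)

lemma hasDerivAt_inn (n : ℕ) (x : ℝ) :
    HasDerivAt (inn n) (2 * x / (96 * 4 ^ n)) x := by
  have h := ((hasDerivAt_pow 2 x).sub_const (100 * 4 ^ n)).div_const (96 * 4 ^ n)
  unfold inn
  simpa using h

lemma hasDerivAt_psi (n : ℕ) (x : ℝ) :
    HasDerivAt (psi n) (-(deriv φ (inn n x) * (2 * x / (96 * 4 ^ n)))) x := by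
  have hφ : HasDerivAt φ (deriv φ (inn n x)) (inn n x) :=
    (st_diff (inn n x)).hasDerivAt
  exact (hφ.comp x (hasDerivAt_inn n x)).const_sub 1

lemma hasDerivAt_dpsi (n : ℕ) (x : ℝ) :
    HasDerivAt (fun y => -(deriv φ (inn n y) * (2 * y / (96 * 4 ^ n))))
      (-(deriv (deriv φ) (inn n x) * (2 * x / (96 * 4 ^ n)) * (2 * x / (96 * 4 ^ n))
        + deriv φ (inn n x) * (2 / (96 * 4 ^ n)))) x := by
  have h1 : HasDerivAt (fun y => deriv φ (inn n y))
      (deriv (deriv φ) (inn n x) * (2 * x / (96 * 4 ^ n))) x :=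
    (deriv_st_diff (inn n x)).hasDerivAt.comp x (hasDerivAt_inn n x)
  have h2 : HasDerivAt (fun y : ℝ => 2 * y / (96 * 4 ^ n)) (2 / (96 * 4 ^ n)) x := by
    simpa using ((hasDerivAt_id x).const_mul 2).div_const (96 * 4 ^ n)
  simpa [mul_comm, mul_assoc, mul_left_comm] using (h1.fun_mul h2).fun_neg

/-! ### The sequence of plateau values and the majorant -/

variable (m : ℝ → ℝ)

noncomputable def c (j : ℕ) : ℝ := if j = 0 then m 0 else m (5 * 2 ^ j)
noncomputable def d (j : ℕ) : ℝ := c m j - c m (j + 1)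
noncomputable def ms (x : ℝ) : ℝ := ∑' j, d m j * psi j x
noncomputable def msd (n : ℕ) (x : ℝ) : ℝ :=
  d m n * -(deriv φ (inn n x) * (2 * x / (96 * 4 ^ n)))
noncomputable def msd2 (n : ℕ) (x : ℝ) : ℝ :=
  d m n * -(deriv (deriv φ) (inn n x) * (2 * x / (96 * 4 ^ n)) * (2 * x / (96 * 4 ^ n))
        + deriv φ (inn n x) * (2 / (96 * 4 ^ n)))

def O (n : ℕ) : Set ℝ := {y | (∀ i, i < n → 14 * 2 ^ i < |y|) ∧ |y| < 10 * 2 ^ (n + 1)}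

variable {m}

section seq
variable (h_pos : ∀ x, 0 < m x) (h_mono : AntitoneOn m (Set.Ici 0))

include h_mono in
lemma c_anti : Antitone (c m) := by
  apply antitone_nat_of_succ_le
  intro n
  rcases Nat.eq_zero_or_pos n with rfl | hn
  · simp only [c, if_neg (Nat.one_ne_zero), if_pos rfl]
    exact h_mono (mem_Ici.mpr le_rfl) (mem_Ici.mpr (by positivity)) (by positivity)
  · have h1 : n ≠ 0 := hn.ne'
    simp only [c, if_neg h1, if_neg (Nat.succ_ne_zero n)]
    apply h_mono (mem_Ici.mpr (by positivity)) (mem_Ici.mpr (by positivity))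
    have : (2:ℝ) ^ n ≤ 2 ^ (n+1) := by
      apply pow_le_pow_right₀ (by norm_num) (Nat.le_succ n)
    linarith

include h_pos in
lemma c_pos : ∀ j, 0 < c m j := by
  intro j; unfold c; split <;> apply h_pos

include h_pos h_mono in
lemma d_nonneg : ∀ j, 0 ≤ d m j := fun j => sub_nonneg.2 (c_anti h_mono (Nat.le_succ j))

variable (h0 : Tendsto m atTop (𝓝 0))

include h0 in
lemma c_tendsto : Tendsto (c m) atTop (𝓝 0) := by
  have h2 : Tendsto (fun j : ℕ => (5:ℝ) * 2 ^ j) atTop atTop := by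
    apply Tendsto.const_mul_atTop (by norm_num)
    exact tendsto_pow_atTop_atTop_of_one_lt (by norm_num)
  have h3 : Tendsto (fun j : ℕ => m (5 * 2 ^ j)) atTop (𝓝 0) := h0.comp h2
  apply h3.congr'
  filter_upwards [eventually_ge_atTop 1] with j hj
  simp [c, Nat.one_le_iff_ne_zero.mp hj]

include h_pos h_mono h0 in
lemma hasSum_shift (n : ℕ) : HasSum (fun i => d m (i + n)) (c m n) := by
  rw [hasSum_iff_tendsto_nat_of_nonneg (fun i => d_nonneg h_pos h_mono (i + n))]
  have key : ∀ N, ∑ i ∈ Finset.range N, d m (i + n) = c m n - c m (N + n) := by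
    intro N
    have := Finset.sum_range_sub' (fun i => c m (i + n)) N
    rw [show c m n = c m (0 + n) by ring_nf, ← this]
    apply Finset.sum_congr rfl
    intro i _
    simp [d, Nat.add_right_comm]
  simp_rw [key]
  have : Tendsto (fun N : ℕ => c m (N + n)) atTop (𝓝 0) :=
    (c_tendsto h0).comp (tendsto_add_atTop_nat n)
  simpa using tendsto_const_nhds.sub this

include h_pos h_mono h0 in
lemma hasSum_d : HasSum (d m) (c m 0) := by simpa using hasSum_shift h_pos h_mono h0 0

include h_pos h_mono h0 in
lemma hasSum_ifelse (n : ℕ) :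
    HasSum (fun i => if i < n then (0:ℝ) else d m i) (c m n) := by
  have h2 := (hasSum_nat_add_iff (f := fun i => if i < n then (0:ℝ) else d m i) n).mp
    (by simpa [Nat.not_lt.2 (Nat.le_add_left n _)] using hasSum_shift h_pos h_mono h0 n)
  simpa [Finset.sum_ite_of_true, Finset.mem_range] using h2

include h_pos h_mono in
lemma summable_g (x : ℝ) (hs : Summable (d m)) : Summable (fun i => d m i * psi i x) := by
  apply Summable.of_nonneg_of_le
    (fun i => mul_nonneg (d_nonneg h_pos h_mono i) (psi_nonneg i x))
    (fun i => mul_le_of_le_one_right (d_nonneg h_pos h_mono i) (psi_le_one i x)) hs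

include h_pos h_mono h0 in
lemma ms_eq (n : ℕ) (x : ℝ) (h1 : ∀ i, i < n → 14 * 2 ^ i ≤ |x|)
    (h2 : |x| ≤ 10 * 2 ^ (n + 1)) :
    ms m x = c m (n + 1) + d m n * psi n x := by
  have hones : ∀ i : ℕ, (fun i => d m (i + (n+1)) * psi (i + (n+1)) x) i
      = d m (i + (n+1)) := by
    intro i
    simp only
    rw [psi_eq_one, mul_one]
    calc |x| ≤ 10 * 2 ^ (n+1) := h2
    _ ≤ 10 * 2 ^ (i + (n+1)) := by
        have : (2:ℝ) ^ (n+1) ≤ 2 ^ (i + (n+1)) :=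
          pow_le_pow_right₀ (by norm_num) (Nat.le_add_left _ _)
        linarith
  have hs : HasSum (fun i => d m (i + (n+1)) * psi (i + (n+1)) x) (c m (n+1)) := by
    rw [funext hones]
    exact hasSum_shift h_pos h_mono h0 (n+1)
  have hg := (hasSum_nat_add_iff (f := fun i => d m i * psi i x) (n+1)).mp hs
  have hsum : ∑ i ∈ Finset.range (n+1), d m i * psi i x = d m n * psi n x := by
    rw [Finset.sum_range_succ]
    rw [Finset.sum_eq_zero, zero_add]
    intro i hi
    rw [psi_eq_zero (h1 i (Finset.mem_range.mp hi)), mul_zero]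
  rw [ms, hg.tsum_eq, hsum, add_comm]

include h_pos h_mono h0 in
lemma ms_le (n : ℕ) (x : ℝ) (h1 : ∀ i, i < n → 14 * 2 ^ i ≤ |x|) :
    ms m x ≤ c m n := by
  have hh := hasSum_ifelse h_pos h_mono h0 n
  rw [ms, ← hh.tsum_eq]
  apply Summable.tsum_le_tsum _ (summable_g h_pos h_mono x (hasSum_d h_pos h_mono h0).summable) hh.summable
  intro i
  by_cases hi : i < n
  · simp [psi_eq_zero (h1 i hi), hi]
  · simp only [if_neg hi]
    exact mul_le_of_le_one_right (d_nonneg h_pos h_mono i) (psi_le_one i x)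

include h_pos h_mono h0 in
lemma le_ms (n : ℕ) (x : ℝ) (h2 : |x| ≤ 10 * 2 ^ n) : c m n ≤ ms m x := by
  have hh := hasSum_ifelse h_pos h_mono h0 n
  rw [ms, ← hh.tsum_eq]
  apply Summable.tsum_le_tsum _ hh.summable (summable_g h_pos h_mono x (hasSum_d h_pos h_mono h0).summable)
  intro i
  by_cases hi : i < n
  · simp only [if_pos hi]
    exact mul_nonneg (d_nonneg h_pos h_mono i) (psi_nonneg i x)
  · simp only [if_neg hi]
    rw [psi_eq_one, mul_one]
    calc |x| ≤ 10 * 2 ^ n := h2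
    _ ≤ 10 * 2 ^ i := by
        have : (2:ℝ) ^ n ≤ 2 ^ i := pow_le_pow_right₀ (by norm_num) (Nat.not_lt.mp hi)
        linarith

/-! ### Coverage -/

omit h_pos h_mono h0

lemma exists_cover (x : ℝ) :
    ∃ n : ℕ, (∀ i, i < n → 14 * 2 ^ i < |x|) ∧ |x| < 10 * 2 ^ (n + 1) := by
  have hex : ∃ n : ℕ, |x| < 10 * 2 ^ (n + 1) := by
    obtain ⟨n, hn⟩ := pow_unbounded_of_one_lt (R := ℝ) (|x| / 10) (by norm_num : (1:ℝ) < 2)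
    refine ⟨n, ?_⟩
    have h1 : |x| < 10 * 2 ^ n := by
      rw [div_lt_iff₀ (by norm_num : (0:ℝ) < 10)] at hn; linarith [hn]
    have : (2:ℝ) ^ n ≤ 2 ^ (n + 1) := pow_le_pow_right₀ (by norm_num) (Nat.le_succ n)
    linarith
  classical
  refine ⟨Nat.find hex, fun i hi => ?_, Nat.find_spec hex⟩
  have hmin := Nat.find_min hex hi
  push_neg at hmin
  have : (14:ℝ) * 2 ^ i < 10 * 2 ^ (i + 1) := by
    rw [pow_succ]; nlinarith [pow_pos (by norm_num : (0:ℝ) < 2) i]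
  linarith

lemma mem_O_cover (x : ℝ) : ∃ n, x ∈ O n := by
  obtain ⟨n, h1, h2⟩ := exists_cover x
  exact ⟨n, h1, h2⟩

lemma isOpen_O (n : ℕ) : IsOpen (O n) := by
  have : O n = (⋂ i ∈ Finset.range n, {y : ℝ | 14 * 2 ^ i < |y|})
      ∩ {y : ℝ | |y| < 10 * 2 ^ (n + 1)} := by
    ext y
    simp [O, Finset.mem_range]
  rw [this]
  apply IsOpen.inter
  · apply isOpen_biInter_finset
    intro i _
    exact isOpen_lt continuous_const continuous_abs
  · exact isOpen_lt continuous_abs continuous_const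

/-! ### The majorant property -/

include h_pos h_mono h0 in
lemma m_le_ms (h_even : ∀ x, m (-x) = m x) (x : ℝ) : m x ≤ ms m x := by
  have hx : m x = m |x| := by
    rcases abs_choice x with h | h
    · rw [h]
    · rw [h, h_even]
  rw [hx]
  have hex : ∃ n : ℕ, |x| ≤ 10 * 2 ^ n := by
    obtain ⟨n, _, hn2⟩ := exists_cover x
    exact ⟨n + 1, hn2.le⟩
  classical
  set n := Nat.find hex with hn
  have hspec : |x| ≤ 10 * 2 ^ n := Nat.find_spec hex
  have hle := le_ms h_pos h_mono h0 n x hspec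
  rcases Nat.eq_zero_or_pos n with h0' | hpos
  · rw [h0'] at hle
    refine le_trans ?_ hle
    simp only [c, if_pos rfl]
    exact h_mono (mem_Ici.mpr le_rfl) (mem_Ici.mpr (abs_nonneg x)) (abs_nonneg x)
  · have hmin := Nat.find_min hex (Nat.sub_lt hpos Nat.one_pos)
    push_neg at hmin
    have hpow : (2:ℝ) ^ n = 2 * 2 ^ (n - 1) := by
      rw [← pow_succ']
      congr 1
      omega
    have h5 : 5 * (2:ℝ) ^ n < |x| := by
      rw [hpow]; linarith
    refine le_trans ?_ hle
    simp only [c, if_neg hpos.ne']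
    exact h_mono (mem_Ici.mpr (by positivity)) (mem_Ici.mpr (abs_nonneg x)) h5.le

include h_pos h_mono h0 in
lemma ms_pos (h_even : ∀ x, m (-x) = m x) (x : ℝ) : 0 < ms m x :=
  lt_of_lt_of_le (h_pos x) (m_le_ms h_pos h_mono h0 h_even x)

/-! ### Local structure, smoothness and derivatives -/

include h_pos h_mono h0 in
lemma ms_eqOn (n : ℕ) : ∀ y ∈ O n, ms m y = c m (n + 1) + d m n * psi n y := by
  intro y hy
  exact ms_eq h_pos h_mono h0 n y (fun i hi => (hy.1 i hi).le) hy.2.le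

include h_pos h_mono h0 in
lemma ms_contDiff : ContDiff ℝ 2 (ms m) := by
  rw [contDiff_iff_contDiffAt]
  intro x
  obtain ⟨n, hn⟩ := mem_O_cover x
  have hF : ContDiff ℝ 2 (fun y => c m (n + 1) + d m n * psi n y) :=
    contDiff_const.add (contDiff_const.mul (psi_contDiff n))
  apply hF.contDiffAt.congr_of_eventuallyEq
  exact eventually_of_mem ((isOpen_O n).mem_nhds hn) (ms_eqOn h_pos h_mono h0 n)

include h_pos h_mono h0 in
lemma hasDerivAt_ms {n : ℕ} {x : ℝ} (hx : x ∈ O n) :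
    HasDerivAt (ms m) (msd m n x) x := by
  have hF : HasDerivAt (fun y => c m (n + 1) + d m n * psi n y) (msd m n x) x :=
    ((hasDerivAt_psi n x).const_mul (d m n)).const_add (c m (n + 1))
  exact hF.congr_of_eventuallyEq
    (eventually_of_mem ((isOpen_O n).mem_nhds hx) (ms_eqOn h_pos h_mono h0 n))

include h_pos h_mono h0 in
lemma deriv_ms_eq {n : ℕ} {x : ℝ} (hx : x ∈ O n) :
    deriv (ms m) x = msd m n x := (hasDerivAt_ms h_pos h_mono h0 hx).deriv

include h_pos h_mono h0 in
lemma deriv2_ms_eq {n : ℕ} {x : ℝ} (hx : x ∈ O n) :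
    deriv (deriv (ms m)) x = msd2 m n x := by
  have hev : deriv (ms m) =ᶠ[𝓝 x] msd m n :=
    eventually_of_mem ((isOpen_O n).mem_nhds hx)
      (fun y hy => deriv_ms_eq h_pos h_mono h0 hy)
  rw [hev.deriv_eq]
  have hF : HasDerivAt (fun y => msd m n y)
      (d m n * -(deriv (deriv φ) (inn n x) * (2 * x / (96 * 4 ^ n)) * (2 * x / (96 * 4 ^ n))
        + deriv φ (inn n x) * (2 / (96 * 4 ^ n)))) x :=
    (hasDerivAt_dpsi n x).const_mul (d m n)
  exact hF.deriv

/-! ### Evenness, antitonicity, plateaus -/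

lemma psi_even (n : ℕ) (x : ℝ) : psi n (-x) = psi n x := by simp [psi, inn]

lemma ms_even (x : ℝ) : ms m (-x) = ms m x := by
  unfold ms; congr 1; funext j; rw [psi_even]

include h_pos h_mono h0 in
lemma ms_anti : AntitoneOn (ms m) (Ici (0:ℝ)) := by
  intro a ha b hb hab
  unfold ms
  apply Summable.tsum_le_tsum _ (summable_g h_pos h_mono b (hasSum_d h_pos h_mono h0).summable)
    (summable_g h_pos h_mono a (hasSum_d h_pos h_mono h0).summable)
  intro i
  exact mul_le_mul_of_nonneg_left (psi_anti i ha hb hab) (d_nonneg h_pos h_mono i)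

include h_pos h_mono h0 in
lemma ms_plateau0 (x : ℝ) (hx : |x| ≤ 10) : ms m x = c m 0 := by
  rw [ms_eq h_pos h_mono h0 0 x (by omega) (by norm_num; linarith),
    psi_eq_one (by norm_num; linarith), d, mul_one]
  ring

include h_pos h_mono h0 in
lemma ms_plateau (n : ℕ) (x : ℝ) (hl : 7 * 2 ^ n ≤ |x|) (hr : |x| ≤ 10 * 2 ^ n) :
    ms m x = c m n := by
  have h1 : ∀ i, i < n → 14 * 2 ^ i ≤ |x| := by
    intro i hi
    have h2 : (14:ℝ) * 2 ^ i ≤ 7 * 2 ^ n := by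
      have : (2:ℝ) ^ (i + 1) ≤ 2 ^ n := pow_le_pow_right₀ (by norm_num) hi
      rw [pow_succ] at this
      nlinarith [pow_pos (by norm_num : (0:ℝ) < 2) i]
    linarith
  have h2 : |x| ≤ 10 * 2 ^ (n + 1) := by
    have : (2:ℝ) ^ n ≤ 2 ^ (n + 1) := pow_le_pow_right₀ (by norm_num) (Nat.le_succ n)
    linarith
  rw [ms_eq h_pos h_mono h0 n x h1 h2, psi_eq_one hr, d, mul_one]
  ring

/-! ### Tendsto lemmas -/

lemma tendsto_cocompact_zero {f : ℝ → ℝ}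
    (h : ∀ ε : ℝ, 0 < ε → ∃ R : ℝ, ∀ x : ℝ, R ≤ |x| → |f x| < ε) :
    Tendsto f (cocompact ℝ) (𝓝 0) := by
  rw [Metric.tendsto_nhds]
  intro ε hε
  obtain ⟨R₀, hR₀⟩ := h ε hε
  rw [eventually_iff, mem_cocompact]
  refine ⟨Icc (-(max R₀ 0)) (max R₀ 0), isCompact_Icc, fun x hx => ?_⟩
  simp only [mem_compl_iff, mem_Icc, not_and_or, not_le] at hx
  have hRnn : (0:ℝ) ≤ max R₀ 0 := le_max_right _ _
  have : max R₀ 0 ≤ |x| := by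
    rcases hx with h | h
    · rw [abs_of_nonpos (by linarith)]; linarith
    · rw [abs_of_pos (by linarith)]; linarith
  simp only [mem_setOf_eq, Real.dist_eq, sub_zero]
  exact hR₀ x (le_trans (le_max_left _ _) this)

include h0 in
lemma c_small : ∀ ε : ℝ, 0 < ε → ∃ N : ℕ, ∀ n, N ≤ n → c m n < ε := by
  intro ε hε
  have h1 : ∀ᶠ n in atTop, c m n < ε := (c_tendsto h0).eventually_lt_const hε
  obtain ⟨N, hN⟩ := eventually_atTop.mp h1
  exact ⟨N, hN⟩

include h_pos h_mono h0 in
lemma ms_tendsto (h_even : ∀ x, m (-x) = m x) : Tendsto (ms m) (cocompact ℝ) (𝓝 0) := by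
  apply tendsto_cocompact_zero
  intro ε hε
  obtain ⟨N, hN⟩ := c_small h0 ε hε
  refine ⟨14 * 2 ^ N, fun x hx => ?_⟩
  have h1 : ∀ i, i < N → 14 * 2 ^ i ≤ |x| := by
    intro i hi
    have : (2:ℝ) ^ i ≤ 2 ^ N := pow_le_pow_right₀ (by norm_num) hi.le
    linarith
  have h2 := ms_le h_pos h_mono h0 N x h1
  rw [abs_of_pos (ms_pos h_pos h_mono h0 h_even x)]
  exact lt_of_le_of_lt h2 (hN N le_rfl)

include h0 in
lemma d_tendsto : Tendsto (d m) atTop (𝓝 0) := by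
  have h1 := (c_tendsto h0).sub ((c_tendsto h0).comp (tendsto_add_atTop_nat 1))
  exact (by simpa using h1 : Tendsto (fun x => c m x - c m (x + 1)) atTop (𝓝 0))

lemma sq_bound {n : ℕ} {x : ℝ} (hx : x ∈ O n) : 2 * x ^ 2 / (96 * 4 ^ n) ≤ 9 := by
  have h2 : |x| < 10 * 2 ^ (n + 1) := hx.2
  have h4 : (4:ℝ) ^ n = ((2:ℝ) ^ n) ^ 2 := four_pow n
  have hx2 : x ^ 2 ≤ 400 * 4 ^ n := by
    rw [h4]
    calc x ^ 2 = |x| ^ 2 := (sq_abs x).symm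
    _ ≤ (10 * 2 ^ (n + 1)) ^ 2 := pow_le_pow_left₀ (abs_nonneg x) h2.le 2
    _ = 400 * ((2:ℝ) ^ n) ^ 2 := by rw [pow_succ]; ring
  rw [div_le_iff₀ (by positivity : (0:ℝ) < 96 * 4 ^ n)]
  nlinarith [pow_pos (by norm_num : (0:ℝ) < 4) n]

include h_pos h_mono in
lemma xmsd_bound {B1 : ℝ} (hB1 : 0 ≤ B1) (hB : ∀ t, |deriv φ t| ≤ B1)
    {n : ℕ} {x : ℝ} (hx : x ∈ O n) :
    |x * msd m n x| ≤ 9 * B1 * d m n := by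
  have heq : x * msd m n x = -(d m n * deriv φ (inn n x) * (2 * x ^ 2 / (96 * 4 ^ n))) := by
    unfold msd; field_simp
  rw [heq, abs_neg, abs_mul, abs_mul]
  have hd := d_nonneg h_pos h_mono n
  rw [abs_of_nonneg hd, abs_of_nonneg (by positivity : (0:ℝ) ≤ 2 * x ^ 2 / (96 * 4 ^ n))]
  calc d m n * |deriv φ (inn n x)| * (2 * x ^ 2 / (96 * 4 ^ n))
      ≤ d m n * B1 * 9 := by
        apply mul_le_mul (mul_le_mul_of_nonneg_left (hB _) hd) (sq_bound hx)
          (by positivity) (by positivity)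
  _ = 9 * B1 * d m n := by ring

include h_pos h_mono in
lemma x2msd2_bound {B1 B2 : ℝ} (hB1 : 0 ≤ B1) (hB : ∀ t, |deriv φ t| ≤ B1)
    (hB2 : 0 ≤ B2) (hB' : ∀ t, |deriv (deriv φ) t| ≤ B2)
    {n : ℕ} {x : ℝ} (hx : x ∈ O n) :
    |x ^ 2 * msd2 m n x| ≤ (81 * B2 + 9 * B1) * d m n := by
  have hd := d_nonneg h_pos h_mono n
  have hq : (0:ℝ) ≤ 2 * x ^ 2 / (96 * 4 ^ n) := by positivity
  have hq9 := sq_bound hx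
  have heq : x ^ 2 * msd2 m n x =
      -(d m n * (deriv (deriv φ) (inn n x) * (2 * x ^ 2 / (96 * 4 ^ n)) * (2 * x ^ 2 / (96 * 4 ^ n))
        + deriv φ (inn n x) * (2 * x ^ 2 / (96 * 4 ^ n)))) := by
    unfold msd2; field_simp
  rw [heq, abs_neg, abs_mul, abs_of_nonneg hd]
  have hin : |deriv (deriv φ) (inn n x) * (2 * x ^ 2 / (96 * 4 ^ n)) * (2 * x ^ 2 / (96 * 4 ^ n))
        + deriv φ (inn n x) * (2 * x ^ 2 / (96 * 4 ^ n))| ≤ 81 * B2 + 9 * B1 := by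
    apply (abs_add_le _ _).trans
    have t1 : |deriv (deriv φ) (inn n x) * (2 * x ^ 2 / (96 * 4 ^ n)) * (2 * x ^ 2 / (96 * 4 ^ n))|
        ≤ 81 * B2 := by
      rw [abs_mul, abs_mul, abs_of_nonneg hq]
      calc |deriv (deriv φ) (inn n x)| * (2 * x ^ 2 / (96 * 4 ^ n)) * (2 * x ^ 2 / (96 * 4 ^ n))
          ≤ B2 * 9 * 9 := by
            apply mul_le_mul (mul_le_mul (hB' _) hq9 hq hB2) hq9 hq (by positivity)
      _ = 81 * B2 := by ring
    have t2 : |deriv φ (inn n x) * (2 * x ^ 2 / (96 * 4 ^ n))| ≤ 9 * B1 := by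
      rw [abs_mul, abs_of_nonneg hq]
      calc |deriv φ (inn n x)| * (2 * x ^ 2 / (96 * 4 ^ n)) ≤ B1 * 9 :=
        mul_le_mul (hB _) hq9 hq hB1
      _ = 9 * B1 := by ring
    linarith
  calc d m n * |_| ≤ d m n * (81 * B2 + 9 * B1) := mul_le_mul_of_nonneg_left hin hd
  _ = (81 * B2 + 9 * B1) * d m n := by ring

include h_pos h_mono h0 in
lemma tendsto_deriv_ms : Tendsto (fun x => x * deriv (ms m) x) (cocompact ℝ) (𝓝 0) := by
  obtain ⟨B1, hB1, hB⟩ := exists_B1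
  apply tendsto_cocompact_zero
  intro ε hε
  have hd9 : Tendsto (fun n => 9 * B1 * d m n) atTop (𝓝 0) := by
    simpa using (d_tendsto h0).const_mul (9 * B1)
  have : ∀ᶠ n in atTop, 9 * B1 * d m n < ε := hd9.eventually_lt_const hε
  obtain ⟨N, hN⟩ := eventually_atTop.mp this
  refine ⟨10 * 2 ^ (N + 1), fun x hx => ?_⟩
  obtain ⟨n, hn⟩ := mem_O_cover x
  have hnN : N ≤ n := by
    by_contra hc
    push_neg at hc
    have h1 : (10:ℝ) * 2 ^ (n + 1) ≤ 10 * 2 ^ (N + 1) := by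
      have : (2:ℝ) ^ (n + 1) ≤ 2 ^ (N + 1) :=
        pow_le_pow_right₀ (by norm_num) (by omega)
      linarith
    linarith [hn.2]
  rw [deriv_ms_eq h_pos h_mono h0 hn]
  exact lt_of_le_of_lt (xmsd_bound h_pos h_mono hB1 hB hn) (hN n hnN)

include h_pos h_mono h0 in
lemma tendsto_deriv2_ms :
    Tendsto (fun x => x ^ 2 * deriv (deriv (ms m)) x) (cocompact ℝ) (𝓝 0) := by
  obtain ⟨B1, hB1, hB⟩ := exists_B1
  obtain ⟨B2, hB2, hB'⟩ := exists_B2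
  apply tendsto_cocompact_zero
  intro ε hε
  have hd9 : Tendsto (fun n => (81 * B2 + 9 * B1) * d m n) atTop (𝓝 0) := by
    simpa using (d_tendsto h0).const_mul (81 * B2 + 9 * B1)
  have : ∀ᶠ n in atTop, (81 * B2 + 9 * B1) * d m n < ε := hd9.eventually_lt_const hε
  obtain ⟨N, hN⟩ := eventually_atTop.mp this
  refine ⟨10 * 2 ^ (N + 1), fun x hx => ?_⟩
  obtain ⟨n, hn⟩ := mem_O_cover x
  have hnN : N ≤ n := by
    by_contra hc
    push_neg at hc
    have h1 : (10:ℝ) * 2 ^ (n + 1) ≤ 10 * 2 ^ (N + 1) := by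
      have : (2:ℝ) ^ (n + 1) ≤ 2 ^ (N + 1) :=
        pow_le_pow_right₀ (by norm_num) (by omega)
      linarith
    linarith [hn.2]
  rw [deriv2_ms_eq h_pos h_mono h0 hn]
  exact lt_of_le_of_lt (x2msd2_bound h_pos h_mono hB1 hB hB2 hB' hn) (hN n hnN)

/-! ### ms is dominated by a dilate of m -/

include h_pos h_mono h0 in
lemma ms_le_quarter (t : ℝ) (ht : 14 ≤ t) : ms m t ≤ m (t / 4) := by
  have habs : |t| = t := abs_of_pos (by linarith)
  have hex : ∃ n : ℕ, t < 14 * 2 ^ (n + 1) := by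
    obtain ⟨n, hn⟩ := pow_unbounded_of_one_lt (R := ℝ) (t / 14) (by norm_num : (1:ℝ) < 2)
    refine ⟨n, ?_⟩
    rw [div_lt_iff₀ (by norm_num : (0:ℝ) < 14)] at hn
    have : (2:ℝ) ^ n ≤ 2 ^ (n + 1) := pow_le_pow_right₀ (by norm_num) (Nat.le_succ n)
    linarith
  classical
  set N := Nat.find hex with hNdef
  have hspec : t < 14 * 2 ^ (N + 1) := Nat.find_spec hex
  have hlow : 14 * (2:ℝ) ^ N ≤ t := by
    rcases Nat.eq_zero_or_pos N with h0' | hpos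
    · rw [h0']; simpa using ht
    · have hmin := Nat.find_min hex (Nat.sub_lt hpos Nat.one_pos)
      push_neg at hmin
      have : N - 1 + 1 = N := by omega
      rw [this] at hmin
      exact hmin
  have h1 : ∀ i, i < N + 1 → 14 * 2 ^ i ≤ |t| := by
    intro i hi
    rw [habs]
    have : (2:ℝ) ^ i ≤ 2 ^ N := pow_le_pow_right₀ (by norm_num) (by omega)
    linarith
  have h2 := ms_le h_pos h_mono h0 (N + 1) t h1
  have h3 : c m (N + 1) = m (5 * 2 ^ (N + 1)) := by
    simp [c]
  have h4 : m (5 * 2 ^ (N + 1)) ≤ m (t / 4) := by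
    apply h_mono (mem_Ici.mpr (by linarith)) (mem_Ici.mpr (by positivity))
    linarith
  calc ms m t ≤ c m (N + 1) := h2
  _ = m (5 * 2 ^ (N + 1)) := h3
  _ ≤ m (t / 4) := h4

end seq

/-! ### negLog facts and the integral arguments -/

lemma negLog_nonneg (t : ℝ) : 0 ≤ negLog t := le_max_right _ _

lemma negLog_anti {a b : ℝ} (ha : 0 < a) (hab : a ≤ b) : negLog b ≤ negLog a :=
  max_le_max (neg_le_neg (Real.log_le_log ha hab)) le_rfl

section integral
variable {m : ℝ → ℝ} (h_pos : ∀ x, 0 < m x) (h_mono : AntitoneOn m (Set.Ici 0))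
  (h_int : ∫⁻ t in Set.Ici (1 : ℝ), ENNReal.ofReal (negLog (m t) / t ^ 2) = ⊤)

include h_pos h_mono h_int in
lemma m_tendsto_zero : Tendsto m atTop (𝓝 0) := by
  have key : ∀ ε : ℝ, 0 < ε → ∃ T : ℝ, 0 ≤ T ∧ m T < ε := by
    intro ε hε
    by_contra hc
    push_neg at hc
    set C : ℝ := negLog ε with hC
    have hC0 : 0 ≤ C := negLog_nonneg ε
    have hbound : ∀ t ∈ Ici (1:ℝ), ENNReal.ofReal (negLog (m t) / t ^ 2)
        ≤ ENNReal.ofReal (C / t ^ 2) := by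
      intro t ht
      apply ENNReal.ofReal_le_ofReal
      apply div_le_div_of_nonneg_right ?_ ?_ |>.trans_eq rfl
      · exact negLog_anti hε (hc t (le_trans zero_le_one ht))
      · have : (1:ℝ) ≤ t := ht
        nlinarith
    have hint2 : IntegrableOn (fun t : ℝ => C / t ^ 2) (Ici (1:ℝ)) := by
      rw [integrableOn_Ici_iff_integrableOn_Ioi]
      have h1 : IntegrableOn (fun t : ℝ => t ^ (-2 : ℝ)) (Ioi (1:ℝ)) :=
        (integrableOn_Ioi_rpow_iff one_pos).mpr (by norm_num)
      apply IntegrableOn.congr_fun (h1.const_mul C) ?_ measurableSet_Ioi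
      intro t ht
      show C * t ^ (-2:ℝ) = C / t ^ 2
      have ht0 : (0:ℝ) < t := lt_trans one_pos ht
      rw [Real.rpow_neg ht0.le, div_eq_mul_inv]
      congr 2
      rw [show ((2:ℝ) = ((2:ℕ):ℝ)) by norm_num, Real.rpow_natCast]
    have hfin : ∫⁻ t in Ici (1:ℝ), ENNReal.ofReal (C / t ^ 2) < ⊤ :=
      hint2.lintegral_lt_top
    exact absurd (h_int.symm.trans_le (setLIntegral_mono' measurableSet_Ici hbound))
      (by simpa [top_le_iff] using hfin.ne)
  rw [Metric.tendsto_atTop]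
  intro ε hε
  obtain ⟨T, hT0, hT⟩ := key ε hε
  refine ⟨T, fun t ht => ?_⟩
  rw [Real.dist_eq, sub_zero, abs_of_pos (h_pos t)]
  exact lt_of_le_of_lt (h_mono (mem_Ici.mpr hT0) (mem_Ici.mpr (le_trans hT0 ht)) ht) hT

noncomputable def G (m : ℝ → ℝ) (s : ℝ) : ℝ≥0∞ := ENNReal.ofReal (negLog (m s) / s ^ 2)

lemma G_meas (h_cont : Continuous m) : Measurable (G m) := by
  apply ENNReal.measurable_ofReal.comp
  apply Measurable.div
  · exact ((Real.measurable_log.neg.max measurable_const)).comp h_cont.measurable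
  · exact (measurable_id.pow_const 2)

include h_pos h_mono h_int in
lemma step_A : ∫⁻ s in Ici ((7:ℝ)/2), G m s = ⊤ := by
  have hsplit : Ico (1:ℝ) (7/2) ∪ Ici ((7:ℝ)/2) = Ici (1:ℝ) :=
    Ico_union_Ici_eq_Ici (by norm_num)
  have hdisj : Disjoint (Ico (1:ℝ) (7/2)) (Ici ((7:ℝ)/2)) := by
    apply Set.disjoint_left.mpr
    intro t ht1 ht2
    exact absurd ht2 (not_le.mpr ht1.2)
  have hsum : (∫⁻ t in Ico (1:ℝ) (7/2), G m t) + ∫⁻ s in Ici ((7:ℝ)/2), G m s = ⊤ := by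
    rw [← lintegral_union measurableSet_Ici hdisj, hsplit]
    exact h_int
  have hfin : ∫⁻ t in Ico (1:ℝ) (7/2), G m t < ⊤ := by
    have hb : ∀ t ∈ Ico (1:ℝ) (7/2), G m t ≤ ENNReal.ofReal (negLog (m (7/2))) := by
      intro t ht
      apply ENNReal.ofReal_le_ofReal
      have h1 : negLog (m t) ≤ negLog (m (7/2)) := by
        apply negLog_anti (h_pos _)
        apply h_mono (mem_Ici.mpr (by linarith [ht.1])) (mem_Ici.mpr (by norm_num)) ht.2.le
      have h2 : negLog (m t) / t ^ 2 ≤ negLog (m t) := by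
        apply div_le_self (negLog_nonneg _)
        nlinarith [ht.1]
      linarith
    calc ∫⁻ t in Ico (1:ℝ) (7/2), G m t
        ≤ ∫⁻ _ in Ico (1:ℝ) (7/2), ENNReal.ofReal (negLog (m (7/2))) :=
          setLIntegral_mono' measurableSet_Ico hb
    _ = ENNReal.ofReal (negLog (m (7/2))) * volume (Ico (1:ℝ) (7/2)) :=
          setLIntegral_const _ _
    _ < ⊤ := by
          rw [Real.volume_Ico]
          exact ENNReal.mul_lt_top ENNReal.ofReal_lt_top ENNReal.ofReal_lt_top
  by_contra hc
  rw [ENNReal.add_eq_top] at hsum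
  rcases hsum with h | h
  · exact hfin.ne h
  · exact hc h

lemma step_B (h_cont : Continuous m) (hA : ∫⁻ s in Ici ((7:ℝ)/2), G m s = ⊤) :
    ∫⁻ t in Ici (14:ℝ), G m (t / 4) = ⊤ := by
  set T : ℝ → ℝ := fun s => 4 * s with hT
  have hTmeas : Measurable T := measurable_const_mul 4
  have hmapT : Measure.map T volume = ENNReal.ofReal |(4:ℝ)⁻¹| • volume :=
    Real.map_volume_mul_left (by norm_num)
  have hpre : T ⁻¹' (Ici (14:ℝ)) = Ici ((7:ℝ)/2) := by
    ext s
    simp only [mem_preimage, mem_Ici, hT]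
    constructor <;> intro h <;> linarith
  have hGm : Measurable (fun t : ℝ => G m (t / 4)) :=
    (G_meas h_cont).comp (measurable_id.div_const 4)
  have h1 : Measure.map T (volume.restrict (Ici ((7:ℝ)/2)))
      = (ENNReal.ofReal |(4:ℝ)⁻¹| • volume).restrict (Ici (14:ℝ)) := by
    rw [← hmapT, Measure.restrict_map hTmeas measurableSet_Ici, hpre]
  have key : ∫⁻ s in Ici ((7:ℝ)/2), G m s
      = ENNReal.ofReal |(4:ℝ)⁻¹| * ∫⁻ t in Ici (14:ℝ), G m (t / 4) := by
    calc ∫⁻ s in Ici ((7:ℝ)/2), G m s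
        = ∫⁻ s, G m (T s / 4) ∂(volume.restrict (Ici ((7:ℝ)/2))) := by
          apply lintegral_congr
          intro s
          apply congrArg (G m)
          simp only [hT]
          ring
    _ = ∫⁻ t, G m (t / 4) ∂(Measure.map T (volume.restrict (Ici ((7:ℝ)/2)))) :=
          (lintegral_map hGm hTmeas).symm
    _ = ∫⁻ t, G m (t / 4) ∂((ENNReal.ofReal |(4:ℝ)⁻¹| • volume).restrict (Ici (14:ℝ))) := by
          rw [h1]
    _ = ENNReal.ofReal |(4:ℝ)⁻¹| * ∫⁻ t in Ici (14:ℝ), G m (t / 4) := by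
          rw [Measure.restrict_smul, lintegral_smul_measure, smul_eq_mul]
  rw [key] at hA
  by_contra hc
  have : ENNReal.ofReal |(4:ℝ)⁻¹| * ∫⁻ t in Ici (14:ℝ), G m (t / 4) < ⊤ :=
    ENNReal.mul_lt_top ENNReal.ofReal_lt_top (lt_top_iff_ne_top.mpr hc)
  exact this.ne hA

include h_pos h_mono h_int in
lemma step_final (h_cont : Continuous m) (ms' : ℝ → ℝ)
    (hms14 : ∀ t : ℝ, 14 ≤ t → ms' t ≤ m (t / 4)) (hms_pos : ∀ x, 0 < ms' x) :
    ∫⁻ t in Set.Ici (1 : ℝ), ENNReal.ofReal (negLog (ms' t) / t ^ 2) = ⊤ := by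
  have hB := step_B h_cont (step_A h_pos h_mono h_int)
  rw [eq_top_iff]
  calc (⊤:ℝ≥0∞) = ENNReal.ofReal (1/16) * ∫⁻ t in Ici (14:ℝ), G m (t / 4) := by
        rw [hB, ENNReal.mul_top (by simp)]
  _ = ∫⁻ t in Ici (14:ℝ), ENNReal.ofReal (1/16) * G m (t / 4) :=
        (lintegral_const_mul' _ _ (by simp)).symm
  _ ≤ ∫⁻ t in Ici (14:ℝ), ENNReal.ofReal (negLog (ms' t) / t ^ 2) := by
        apply setLIntegral_mono' measurableSet_Ici
        intro t ht
        rw [mem_Ici] at ht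
        have ht0 : (0:ℝ) < t := by linarith
        rw [G, ← ENNReal.ofReal_mul (by norm_num)]
        apply ENNReal.ofReal_le_ofReal
        have h1 : negLog (m (t/4)) ≤ negLog (ms' t) :=
          negLog_anti (hms_pos t) (hms14 t ht)
        have h2 : (1:ℝ)/16 * (negLog (m (t/4)) / (t/4) ^ 2) = negLog (m (t/4)) / t ^ 2 := by
          field_simp
          ring
        rw [h2]
        apply div_le_div_of_nonneg_right h1 (by positivity) |>.trans_eq rfl
  _ ≤ ∫⁻ t in Ici (1:ℝ), ENNReal.ofReal (negLog (ms' t) / t ^ 2) :=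
        lintegral_mono_set (fun t ht => le_trans (by norm_num : (1:ℝ) ≤ 14) ht)

end integral
end S3aux

/-- An even, positive, continuous function `m`, non-increasing on `[0, ∞)`, with divergent
logarithmic integral, admits a tame majorant with divergent logarithmic integral. -/
theorem statement3 (m : ℝ → ℝ)
    (h_even : ∀ x, m (-x) = m x) (h_pos : ∀ x, 0 < m x)
    (h_cont : Continuous m) (h_mono : AntitoneOn m (Set.Ici 0))
    (h_int : ∫⁻ t in Set.Ici (1 : ℝ), ENNReal.ofReal (negLog (m t) / t ^ 2) = ⊤) :
    ∃ ms : ℝ → ℝ, Tame ms ∧ (∀ x, m x ≤ ms x) ∧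
      ∫⁻ t in Set.Ici (1 : ℝ), ENNReal.ofReal (negLog (ms t) / t ^ 2) = ⊤ := by
  have h0 : Tendsto m atTop (𝓝 0) := S3aux.m_tendsto_zero h_pos h_mono h_int
  refine ⟨S3aux.ms m, ?_, fun x => S3aux.m_le_ms h_pos h_mono h0 h_even x, ?_⟩
  · refine ⟨fun x => S3aux.ms_even x,
      fun x => S3aux.ms_pos h_pos h_mono h0 h_even x,
      S3aux.ms_anti h_pos h_mono h0,
      S3aux.ms_contDiff h_pos h_mono h0,
      S3aux.ms_tendsto h_pos h_mono h0 h_even,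
      S3aux.tendsto_deriv_ms h_pos h_mono h0,
      S3aux.tendsto_deriv2_ms h_pos h_mono h0,
      ⟨S3aux.c m 0, fun x hx => S3aux.ms_plateau0 h_pos h_mono h0 x (hx.trans (by norm_num))⟩,
      ?_⟩
    intro k hk
    obtain ⟨j, rfl⟩ : ∃ j, k = j + 3 := ⟨k - 3, by omega⟩
    refine ⟨S3aux.c m j, fun x hl hr => ?_⟩
    have e1 : (2:ℝ) ^ (j + 3) - 2 ^ (j + 3 - 3) = 7 * 2 ^ j := by
      simp only [Nat.add_sub_cancel, pow_add]; ring
    have e2 : (2:ℝ) ^ (j + 3) + 2 ^ (j + 3 - 2) = 10 * 2 ^ j := by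
      have h32 : j + 3 - 2 = j + 1 := by omega
      rw [h32, pow_add, pow_succ]; ring
    exact S3aux.ms_plateau h_pos h_mono h0 j x (by rw [← e1]; exact hl)
      (by rw [← e2]; exact hr)
  · exact S3aux.step_final h_pos h_mono h_int h_cont (S3aux.ms m)
      (fun t ht => S3aux.ms_le_quarter h_pos h_mono h0 t ht)
      (fun x => S3aux.ms_pos h_pos h_mono h0 h_even x)
end

section
/- There exists a constant C > 0 such that for every t ≥ 1 and every μ with 0 < μ ≤ t, the integral ∫₀^π sin θ/(t·sin θ + μ)² dθ is at most C·(1 + log(t/μ))/t². -/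
open Real intervalIntegral
lemma contint (a μ : ℝ) (ha : 0 < a) (hμ : 0 < μ) :
    IntervalIntegrable (fun θ => 1/(a*θ+μ)) MeasureTheory.volume 0 Real.pi := by
  apply ContinuousOn.intervalIntegrable
  apply ContinuousOn.div continuousOn_const (by fun_prop)
  intro x hx
  rw [Set.uIcc_of_le Real.pi_pos.le] at hx
  nlinarith [hx.1]

lemma aux1 (a μ : ℝ) (ha : 0 < a) (hμ : 0 < μ) :
    ∫ θ in (0:ℝ)..Real.pi, 1/(a*θ+μ) = (Real.log (a*Real.pi+μ) - Real.log μ)/a := by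
  have h := intervalIntegral.integral_eq_sub_of_hasDerivAt
    (f := fun θ => Real.log (a*θ+μ)/a) (f' := fun θ => 1/(a*θ+μ))
    (a := (0:ℝ)) (b := Real.pi) ?_ (contint a μ ha hμ)
  · rw [h]; simp only [mul_zero, zero_add]; ring
  · intro x hx
    rw [Set.uIcc_of_le Real.pi_pos.le] at hx
    have hpos : 0 < a*x+μ := by nlinarith [hx.1]
    have h1 : HasDerivAt (fun θ : ℝ => a*θ+μ) a x := by
      simpa using ((hasDerivAt_id x).const_mul a).add_const μ
    have h2 := (Real.hasDerivAt_log hpos.ne').comp x h1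
    have h3 := h2.div_const a
    convert h3 using 1
    · rfl
    · rfl
    · field_simp

lemma contint2 (a μ : ℝ) (ha : 0 < a) (hμ : 0 < μ) :
    IntervalIntegrable (fun θ => 1/(a*(Real.pi-θ)+μ)) MeasureTheory.volume 0 Real.pi := by
  apply ContinuousOn.intervalIntegrable
  apply ContinuousOn.div continuousOn_const (by fun_prop)
  intro x hx
  rw [Set.uIcc_of_le Real.pi_pos.le] at hx
  nlinarith [hx.2]

lemma aux2 (a μ : ℝ) (ha : 0 < a) (hμ : 0 < μ) :
    ∫ θ in (0:ℝ)..Real.pi, 1/(a*(Real.pi-θ)+μ)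
      = (Real.log (a*Real.pi+μ) - Real.log μ)/a := by
  have h := intervalIntegral.integral_eq_sub_of_hasDerivAt
    (f := fun θ => -(Real.log (a*(Real.pi-θ)+μ)/a)) (f' := fun θ => 1/(a*(Real.pi-θ)+μ))
    (a := (0:ℝ)) (b := Real.pi) ?_ (contint2 a μ ha hμ)
  · rw [h]; simp only [sub_self, mul_zero, zero_add, sub_zero]; ring
  · intro x hx
    rw [Set.uIcc_of_le Real.pi_pos.le] at hx
    have hpos : 0 < a*(Real.pi-x)+μ := by nlinarith [hx.2]
    have h1 : HasDerivAt (fun θ : ℝ => a*(Real.pi-θ)+μ) (-a) x := by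
      have : HasDerivAt (fun θ : ℝ => Real.pi - θ) (-1) x := by
        simpa using (hasDerivAt_id x).const_sub Real.pi
      simpa using (this.const_mul a).add_const μ
    have h2 := (Real.hasDerivAt_log hpos.ne').comp x h1
    have h3 := (h2.div_const a).neg
    convert h3 using 1
    · rfl
    · field_simp

/-- There is a constant `C > 0` such that for every `t ≥ 1` and every `0 < μ ≤ t`,
`∫₀^π sin θ/(t·sin θ + μ)² dθ ≤ C·(1 + log(t/μ))/t²`. -/
theorem statement9 :
    ∃ C : ℝ, 0 < C ∧ ∀ t : ℝ, 1 ≤ t → ∀ μ : ℝ, 0 < μ → μ ≤ t →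
      (∫ θ in (0 : ℝ)..Real.pi, Real.sin θ / (t * Real.sin θ + μ) ^ 2) ≤
        C * (1 + Real.log (t / μ)) / t ^ 2 := by
  refine ⟨8, by norm_num, ?_⟩
  intro t ht μ hμ hμt
  have htpos : (0:ℝ) < t := lt_of_lt_of_le one_pos ht
  set a : ℝ := 2*t/Real.pi with ha_def
  have hapos : 0 < a := by positivity
  -- the dominating function
  set g : ℝ → ℝ := fun θ => (1/t) * (1/(a*θ+μ)) + (1/t) * (1/(a*(Real.pi-θ)+μ)) with hg
  -- integrability of f
  have hfint : IntervalIntegrable (fun θ => Real.sin θ / (t * Real.sin θ + μ) ^ 2)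
      MeasureTheory.volume 0 Real.pi := by
    apply ContinuousOn.intervalIntegrable
    apply ContinuousOn.div (by fun_prop) (by fun_prop)
    intro x hx
    rw [Set.uIcc_of_le Real.pi_pos.le] at hx
    have : 0 < t * Real.sin x + μ := by
      have := Real.sin_nonneg_of_nonneg_of_le_pi hx.1 hx.2
      nlinarith
    positivity
  have hgint : IntervalIntegrable g MeasureTheory.volume 0 Real.pi :=
    (((contint a μ hapos hμ).const_mul (1/t)).add ((contint2 a μ hapos hμ).const_mul (1/t)))
  -- pointwise bound
  have hpt : ∀ x ∈ Set.Icc (0:ℝ) Real.pi,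
      Real.sin x / (t * Real.sin x + μ) ^ 2 ≤ g x := by
    intro x hx
    have hsin : 0 ≤ Real.sin x := Real.sin_nonneg_of_nonneg_of_le_pi hx.1 hx.2
    have hD : 0 < t * Real.sin x + μ := by nlinarith
    have hstep1 : Real.sin x / (t * Real.sin x + μ) ^ 2 ≤ (1/t) * (1/(t * Real.sin x + μ)) := by
      rw [div_le_iff₀ (by positivity)]
      have h2 : (1/t) * (1/(t * Real.sin x + μ)) = 1/(t*(t * Real.sin x + μ)) := by
        field_simp
      rw [h2]
      rw [div_mul_eq_mul_div, le_div_iff₀ (by positivity)]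
      nlinarith
    -- a θ ≤ t sin θ in one of two cases
    have hcase : a * x ≤ t * Real.sin x ∨ a * (Real.pi - x) ≤ t * Real.sin x := by
      rcases le_or_gt x (Real.pi/2) with h | h
      · left
        have hts := Real.mul_le_sin hx.1 h
        rw [div_mul_eq_mul_div, div_le_iff₀ Real.pi_pos] at hts
        rw [ha_def]
        rw [div_mul_eq_mul_div, div_le_iff₀ Real.pi_pos]
        nlinarith [mul_le_mul_of_nonneg_left hts htpos.le]
      · right
        have h1 : (0:ℝ) ≤ Real.pi - x := by linarith [hx.2]
        have h2 : Real.pi - x ≤ Real.pi/2 := by linarith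
        have hts := Real.mul_le_sin h1 h2
        rw [div_mul_eq_mul_div, div_le_iff₀ Real.pi_pos] at hts
        rw [← Real.sin_pi_sub x]
        rw [ha_def, div_mul_eq_mul_div, div_le_iff₀ Real.pi_pos]
        nlinarith [mul_le_mul_of_nonneg_left hts htpos.le]
    have hA : 0 < a*x+μ := by nlinarith [hx.1]
    have hB : 0 < a*(Real.pi-x)+μ := by nlinarith [hx.2]
    have hstep2 : 1/(t * Real.sin x + μ) ≤ 1/(a*x+μ) + 1/(a*(Real.pi-x)+μ) := by
      rcases hcase with h | h
      · have : 1/(t * Real.sin x + μ) ≤ 1/(a*x+μ) :=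
          one_div_le_one_div_of_le hA (by linarith)
        have hpos2 : 0 < 1/(a*(Real.pi-x)+μ) := by positivity
        linarith
      · have : 1/(t * Real.sin x + μ) ≤ 1/(a*(Real.pi-x)+μ) :=
          one_div_le_one_div_of_le hB (by linarith)
        have hpos2 : 0 < 1/(a*x+μ) := by positivity
        linarith
    calc Real.sin x / (t * Real.sin x + μ) ^ 2
        ≤ (1/t) * (1/(t * Real.sin x + μ)) := hstep1
      _ ≤ (1/t) * (1/(a*x+μ) + 1/(a*(Real.pi-x)+μ)) := by
          apply mul_le_mul_of_nonneg_left hstep2 (by positivity)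
      _ = g x := by rw [hg]; ring
  have hmono := intervalIntegral.integral_mono_on Real.pi_pos.le hfint hgint hpt
  -- compute ∫ g
  have hgval : (∫ θ in (0:ℝ)..Real.pi, g θ)
      = (1/t) * ((Real.log (a*Real.pi+μ) - Real.log μ)/a)
        + (1/t) * ((Real.log (a*Real.pi+μ) - Real.log μ)/a) := by
    rw [hg]
    rw [intervalIntegral.integral_add ((contint a μ hapos hμ).const_mul (1/t))
      ((contint2 a μ hapos hμ).const_mul (1/t))]
    rw [intervalIntegral.integral_const_mul, intervalIntegral.integral_const_mul,
      aux1 a μ hapos hμ, aux2 a μ hapos hμ]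
  -- simplify: a*π = 2t, 2/(t*a) = π/t²
  have hapi : a * Real.pi = 2*t := by
    rw [ha_def]; field_simp
  have hgval2 : (∫ θ in (0:ℝ)..Real.pi, g θ)
      = Real.pi * (Real.log (2*t+μ) - Real.log μ) / t^2 := by
    rw [hgval, hapi, ha_def]
    have hπ := Real.pi_pos
    field_simp
    ring
  -- final arithmetic
  have hlog3 : Real.log 3 ≤ 2 := by
    have := Real.log_le_sub_one_of_pos (by norm_num : (0:ℝ) < 3)
    linarith
  have hL : 0 ≤ Real.log (t/μ) := Real.log_nonneg (by rw [le_div_iff₀ hμ]; linarith)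
  have hlogle : Real.log (2*t+μ) - Real.log μ ≤ Real.log 3 + Real.log (t/μ) := by
    have h1 : Real.log (2*t+μ) ≤ Real.log (3*t) :=
      Real.log_le_log (by linarith) (by linarith)
    have h2 : Real.log (3*t) = Real.log 3 + Real.log t :=
      Real.log_mul (by norm_num) htpos.ne'
    have h3 : Real.log (t/μ) = Real.log t - Real.log μ := Real.log_div htpos.ne' hμ.ne'
    linarith
  have hfin : Real.pi * (Real.log (2*t+μ) - Real.log μ) ≤ 8 * (1 + Real.log (t/μ)) := by
    have hπ4 : Real.pi ≤ 4 := Real.pi_le_four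
    have hnn : 0 ≤ Real.log (2*t+μ) - Real.log μ := by
      have := Real.log_le_log hμ (by linarith : μ ≤ 2*t+μ)
      linarith
    nlinarith [Real.pi_pos]
  calc (∫ θ in (0:ℝ)..Real.pi, Real.sin θ / (t * Real.sin θ + μ) ^ 2)
      ≤ ∫ θ in (0:ℝ)..Real.pi, g θ := hmono
    _ = Real.pi * (Real.log (2*t+μ) - Real.log μ) / t^2 := hgval2
    _ ≤ 8 * (1 + Real.log (t/μ)) / t^2 := by
        apply div_le_div_of_nonneg_right hfin (by positivity) |>.trans_eq rfl
end

section
/- Let m : ℝ → ℝ be an even, positive, continuous function that is non-increasing on [0,∞), and assume that ∫₁^∞ (log⁻ m(t))/t² dt < ∞. Then the double integral ∫₁^∞ ( ∫₀^π sin θ/(t·sin θ + m(t·cos θ))² dθ ) dt is finite. -/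
open MeasureTheory

open Real

lemma lintA {c d l u : ℝ} (hc : c ≠ 0) (hlu : l ≤ u)
    (hpos : ∀ θ ∈ Set.Icc l u, 0 < c * θ + d) :
    ∫⁻ θ in Set.Icc l u, ENNReal.ofReal (1 / (c * θ + d)) =
      ENNReal.ofReal ((Real.log (c * u + d) - Real.log (c * l + d)) / c) := by
  have hcont : ContinuousOn (fun θ : ℝ => 1 / (c * θ + d)) (Set.Icc l u) := by
    apply ContinuousOn.div continuousOn_const
    · fun_prop
    · intro x hx; exact (hpos x hx).ne'
  have hint : IntegrableOn (fun θ : ℝ => 1 / (c * θ + d)) (Set.Icc l u) :=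
    hcont.integrableOn_compact isCompact_Icc
  have hnn : 0 ≤ᵐ[volume.restrict (Set.Icc l u)] fun θ : ℝ => 1 / (c * θ + d) := by
    filter_upwards [ae_restrict_mem measurableSet_Icc] with x hx
    exact le_of_lt (div_pos one_pos (hpos x hx))
  rw [← ofReal_integral_eq_lintegral_ofReal hint hnn]
  congr 1
  have h1 : ∫ θ in Set.Icc l u, 1 / (c * θ + d) = ∫ θ in l..u, 1 / (c * θ + d) := by
    rw [intervalIntegral.integral_of_le hlu, MeasureTheory.integral_Icc_eq_integral_Ioc]
  rw [h1]
  have : ∀ x ∈ Set.uIcc l u, HasDerivAt (fun y => Real.log (c * y + d) / c) (1 / (c * x + d)) x := by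
    intro x hx
    rw [Set.uIcc_of_le hlu] at hx
    have h0 : c * x + d ≠ 0 := (hpos x hx).ne'
    have hd : HasDerivAt (fun y : ℝ => c * y + d) c x := by
      simpa using ((hasDerivAt_id x).const_mul c).add_const d
    have := ((Real.hasDerivAt_log h0).comp x hd).div_const c
    refine this.congr_deriv ?_
    field_simp
  rw [intervalIntegral.integral_eq_sub_of_hasDerivAt this
    (hcont.intervalIntegrable_of_Icc hlu)]
  ring

lemma logkey {t a : ℝ} (ht : 1 ≤ t) (ha : 0 < a) :
    Real.log (t + a) - Real.log a ≤ Real.log (t + 1) + negLog a := by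
  have ht0 : (0:ℝ) < t := lt_of_lt_of_le one_pos ht
  rcases le_or_gt a 1 with h | h
  · have h1 : Real.log (t + a) ≤ Real.log (t + 1) :=
      Real.log_le_log (by linarith) (by linarith)
    have h2 : -Real.log a ≤ negLog a := le_max_left _ _
    linarith
  · have h0 : (0:ℝ) ≤ negLog a := le_max_right _ _
    have h1 : Real.log (t + a) ≤ Real.log (a * (t + 1)) :=
      Real.log_le_log (by linarith) (by nlinarith)
    rw [Real.log_mul (by linarith) (by linarith)] at h1
    linarith

lemma inner_bound (m : ℝ → ℝ)
    (h_even : ∀ x, m (-x) = m x) (h_pos : ∀ x, 0 < m x)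
    (h_mono : AntitoneOn m (Set.Ici 0)) {t : ℝ} (ht : 1 ≤ t) :
    (∫⁻ θ in Set.Icc (0 : ℝ) Real.pi,
      ENNReal.ofReal (Real.sin θ / (t * Real.sin θ + m (t * Real.cos θ)) ^ 2)) ≤
    ENNReal.ofReal (π * ((Real.log (t + 1) + negLog (m t)) / t ^ 2)) := by
  have ht0 : (0:ℝ) < t := lt_of_lt_of_le one_pos ht
  set a := m t with ha_def
  have ha : 0 < a := h_pos t
  have hπ : (0:ℝ) < π := Real.pi_pos
  -- step 1
  have step1 : (∫⁻ θ in Set.Icc (0 : ℝ) π,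
      ENNReal.ofReal (Real.sin θ / (t * Real.sin θ + m (t * Real.cos θ)) ^ 2)) ≤
      ∫⁻ θ in Set.Icc (0 : ℝ) π, ENNReal.ofReal (1 / t * (1 / (t * Real.sin θ + a))) := by
    apply setLIntegral_mono (by fun_prop) 
    intro θ hθ
    have hs : 0 ≤ Real.sin θ := Real.sin_nonneg_of_nonneg_of_le_pi hθ.1 hθ.2
    have hma : a ≤ m (t * Real.cos θ) := by
      have habs : |t * Real.cos θ| ≤ t := by
        rw [abs_mul, abs_of_pos ht0]
        calc t * |Real.cos θ| ≤ t * 1 := by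
              exact mul_le_mul_of_nonneg_left (Real.abs_cos_le_one θ) ht0.le
          _ = t := mul_one t
      have hmx : m (t * Real.cos θ) = m |t * Real.cos θ| := by
        rcases abs_cases (t * Real.cos θ) with ⟨h, _⟩ | ⟨h, _⟩
        · rw [h]
        · rw [h, h_even]
      rw [hmx]
      exact h_mono (Set.mem_Ici.2 (abs_nonneg _)) (Set.mem_Ici.2 ht0.le) habs
    apply ENNReal.ofReal_le_ofReal
    have hD' : 0 < t * Real.sin θ + a := by positivity
    have hD : t * Real.sin θ + a ≤ t * Real.sin θ + m (t * Real.cos θ) := by linarith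
    have hsle : Real.sin θ ≤ (t * Real.sin θ + a) / t := by
      rw [le_div_iff₀ ht0]; nlinarith
    calc Real.sin θ / (t * Real.sin θ + m (t * Real.cos θ)) ^ 2
        ≤ Real.sin θ / (t * Real.sin θ + a) ^ 2 := by gcongr
      _ ≤ ((t * Real.sin θ + a) / t) / (t * Real.sin θ + a) ^ 2 := by gcongr
      _ = 1 / t * (1 / (t * Real.sin θ + a)) := by field_simp
  -- split
  have split : (∫⁻ θ in Set.Icc (0 : ℝ) π,
      ENNReal.ofReal (1 / t * (1 / (t * Real.sin θ + a)))) ≤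
      (∫⁻ θ in Set.Icc (0 : ℝ) (π/2), ENNReal.ofReal (1 / t * (1 / (t * Real.sin θ + a)))) +
      ∫⁻ θ in Set.Icc (π/2) π, ENNReal.ofReal (1 / t * (1 / (t * Real.sin θ + a))) := by
    rw [← Set.Icc_union_Icc_eq_Icc (by linarith : (0:ℝ) ≤ π/2) (by linarith : π/2 ≤ π)]
    exact lintegral_union_le _ _ _
  -- step 3a
  have step3a : (∫⁻ θ in Set.Icc (0 : ℝ) (π/2),
      ENNReal.ofReal (1 / t * (1 / (t * Real.sin θ + a)))) ≤
      ∫⁻ θ in Set.Icc (0 : ℝ) (π/2), ENNReal.ofReal (1 / t * (1 / (2 / π * t * θ + a))) := by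
    apply setLIntegral_mono (by fun_prop)
    intro θ hθ
    have hsin : 2 / π * θ ≤ Real.sin θ := Real.mul_le_sin hθ.1 hθ.2
    apply ENNReal.ofReal_le_ofReal
    have h1 : 0 < 2 / π * t * θ + a := by
      have : 0 ≤ 2 / π * t * θ := mul_nonneg (by positivity) hθ.1
      linarith
    have h2 : 2 / π * t * θ + a ≤ t * Real.sin θ + a := by nlinarith
    gcongr
  -- step 3b
  have step3b : (∫⁻ θ in Set.Icc (π/2) π,
      ENNReal.ofReal (1 / t * (1 / (t * Real.sin θ + a)))) ≤
      ∫⁻ θ in Set.Icc (π/2) π, ENNReal.ofReal (1 / t * (1 / (-(2 / π * t) * θ + (2 * t + a)))) := by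
    apply setLIntegral_mono (by fun_prop)
    intro θ hθ
    have h1 : (0:ℝ) ≤ π - θ := by linarith [hθ.2]
    have h2 : π - θ ≤ π / 2 := by linarith [hθ.1]
    have hsin : 2 / π * (π - θ) ≤ Real.sin θ := by
      have := Real.mul_le_sin h1 h2
      rwa [Real.sin_pi_sub] at this
    have heq : -(2 / π * t) * θ + (2 * t + a) = t * (2 / π * (π - θ)) + a := by
      field_simp; ring
    apply ENNReal.ofReal_le_ofReal
    rw [heq]
    have hp1 : 0 < t * (2 / π * (π - θ)) + a := by
      have : 0 ≤ t * (2 / π * (π - θ)) := mul_nonneg ht0.le (mul_nonneg (by positivity) h1)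
      linarith
    have hp2 : t * (2 / π * (π - θ)) + a ≤ t * Real.sin θ + a := by nlinarith
    gcongr
  -- evaluate both model integrals
  have hc1 : (2 / π * t) ≠ 0 := by positivity
  have e1 : (∫⁻ θ in Set.Icc (0 : ℝ) (π/2), ENNReal.ofReal (1 / t * (1 / (2 / π * t * θ + a)))) =
      ENNReal.ofReal (1 / t) * ENNReal.ofReal ((Real.log (t + a) - Real.log a) * (π / (2 * t))) := by
    have : ∀ θ : ℝ, ENNReal.ofReal (1 / t * (1 / (2 / π * t * θ + a))) =
        ENNReal.ofReal (1 / t) * ENNReal.ofReal (1 / (2 / π * t * θ + a)) := fun θ => by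
      rw [← ENNReal.ofReal_mul (by positivity)]
    simp_rw [this]
    rw [lintegral_const_mul' _ _ ENNReal.ofReal_ne_top,
      lintA hc1 (by linarith) (fun θ hθ => by
        have : 0 ≤ 2 / π * t * θ := mul_nonneg (by positivity) hθ.1
        linarith)]
    congr 1
    have h2 : 2 / π * t * (π / 2) + a = t + a := by field_simp
    have h3 : 2 / π * t * 0 + a = a := by ring
    rw [h2, h3]
    field_simp
  have hc2 : -(2 / π * t) ≠ 0 := neg_ne_zero.2 hc1
  have hkey : 2 / π * t * π = 2 * t := by field_simp
  have e2 : (∫⁻ θ in Set.Icc (π/2) π, ENNReal.ofReal (1 / t * (1 / (-(2 / π * t) * θ + (2 * t + a))))) =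
      ENNReal.ofReal (1 / t) * ENNReal.ofReal ((Real.log (t + a) - Real.log a) * (π / (2 * t))) := by
    have : ∀ θ : ℝ, ENNReal.ofReal (1 / t * (1 / (-(2 / π * t) * θ + (2 * t + a)))) =
        ENNReal.ofReal (1 / t) * ENNReal.ofReal (1 / (-(2 / π * t) * θ + (2 * t + a))) := fun θ => by
      rw [← ENNReal.ofReal_mul (by positivity)]
    simp_rw [this]
    have hq : (0:ℝ) < 2 / π * t := by positivity
    rw [lintegral_const_mul' _ _ ENNReal.ofReal_ne_top,
      lintA hc2 (by linarith) (fun θ hθ => by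
        have h4 := mul_le_mul_of_nonneg_left hθ.2 hq.le
        rw [hkey] at h4
        nlinarith)]
    congr 1
    have h2 : -(2 / π * t) * π + (2 * t + a) = a := by
      rw [show -(2 / π * t) * π = -(2 / π * t * π) by ring, hkey]; ring
    have h3 : -(2 / π * t) * (π/2) + (2 * t + a) = t + a := by
      field_simp; ring
    rw [h2, h3]
    congr 1
    field_simp
    ring
  -- combine
  have hV : 0 ≤ (Real.log (t + a) - Real.log a) * (π / (2 * t)) :=
    mul_nonneg (sub_nonneg.2 (Real.log_le_log ha (by linarith))) (by positivity)
  calc (∫⁻ θ in Set.Icc (0 : ℝ) π,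
      ENNReal.ofReal (Real.sin θ / (t * Real.sin θ + m (t * Real.cos θ)) ^ 2))
      ≤ ∫⁻ θ in Set.Icc (0 : ℝ) π, ENNReal.ofReal (1 / t * (1 / (t * Real.sin θ + a))) := step1
    _ ≤ _ := split
    _ ≤ (∫⁻ θ in Set.Icc (0 : ℝ) (π/2), ENNReal.ofReal (1 / t * (1 / (2 / π * t * θ + a)))) +
        ∫⁻ θ in Set.Icc (π/2) π, ENNReal.ofReal (1 / t * (1 / (-(2 / π * t) * θ + (2 * t + a)))) :=
      add_le_add step3a step3b
    _ = ENNReal.ofReal (1 / t) * (ENNReal.ofReal ((Real.log (t + a) - Real.log a) * (π / (2 * t))) +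
        ENNReal.ofReal ((Real.log (t + a) - Real.log a) * (π / (2 * t)))) := by
      rw [e1, e2, mul_add]
    _ = ENNReal.ofReal (1 / t * ((Real.log (t + a) - Real.log a) * (π / (2 * t)) +
        (Real.log (t + a) - Real.log a) * (π / (2 * t)))) := by
      rw [← ENNReal.ofReal_add hV hV, ← ENNReal.ofReal_mul (by positivity)]
    _ ≤ ENNReal.ofReal (π * ((Real.log (t + 1) + negLog a) / t ^ 2)) := by
      apply ENNReal.ofReal_le_ofReal
      have hrw : 1 / t * ((Real.log (t + a) - Real.log a) * (π / (2 * t)) +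
          (Real.log (t + a) - Real.log a) * (π / (2 * t))) =
          π * ((Real.log (t + a) - Real.log a) / t ^ 2) := by
        field_simp; ring
      rw [hrw]
      gcongr
      exact logkey ht ha

lemma logC : (∫⁻ t in Set.Ici (1:ℝ), ENNReal.ofReal (Real.log (t + 1) / t ^ 2)) ≠ ⊤ := by
  have hb : ∀ t ∈ Set.Ici (1:ℝ), ENNReal.ofReal (Real.log (t + 1) / t ^ 2) ≤
      ENNReal.ofReal (2 * t ^ (-3/2 : ℝ)) := by
    intro t ht
    simp only [Set.mem_Ici] at ht
    have ht0 : (0:ℝ) < t := lt_of_lt_of_le one_pos ht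
    have hlog : Real.log (t + 1) ≤ 2 * Real.sqrt t := by
      have e : Real.log (t + 1) ≤ Real.log (2 * t) :=
        Real.log_le_log (by linarith) (by linarith)
      rw [Real.log_mul two_ne_zero ht0.ne'] at e
      have l2 : Real.log 2 ≤ 1 := by
        linarith [Real.log_le_sub_one_of_pos (by norm_num : (0:ℝ) < 2)]
      have ls : Real.log t ≤ 2 * (Real.sqrt t - 1) := by
        have h := Real.log_le_sub_one_of_pos (Real.sqrt_pos.2 ht0)
        rw [Real.log_sqrt ht0.le] at h
        linarith
      linarith
    have heq : 2 * Real.sqrt t / t ^ 2 = 2 * t ^ (-3/2 : ℝ) := by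
      rw [Real.sqrt_eq_rpow, show (t:ℝ) ^ 2 = t ^ (2:ℝ) by
        rw [← Real.rpow_natCast t 2]; norm_num, mul_div_assoc,
        ← Real.rpow_sub ht0]
      norm_num
    apply ENNReal.ofReal_le_ofReal
    rw [← heq]
    gcongr
  have key : (∫⁻ t in Set.Ici (1:ℝ), ENNReal.ofReal (2 * t ^ (-3/2 : ℝ))) ≠ ⊤ := by
    rw [← setLIntegral_congr (Ioi_ae_eq_Ici (a := (1:ℝ)))]
    have hint : IntegrableOn (fun t : ℝ => 2 * t ^ (-3/2 : ℝ)) (Set.Ioi 1) :=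
      (integrableOn_Ioi_rpow_of_lt (by norm_num) one_pos).const_mul 2
    have hnn : 0 ≤ᵐ[volume.restrict (Set.Ioi (1:ℝ))] fun t : ℝ => 2 * t ^ (-3/2 : ℝ) := by
      filter_upwards [ae_restrict_mem measurableSet_Ioi] with x hx
      have : (0:ℝ) < x := lt_trans one_pos hx
      positivity
    rw [← ofReal_integral_eq_lintegral_ofReal hint hnn]
    exact ENNReal.ofReal_ne_top
  exact ne_top_of_le_ne_top key (setLIntegral_mono (by fun_prop) hb)

/-- If `m` is even, positive, continuous, non-increasing on `[0, ∞)` and its logarithmic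
integral converges, then `∫₁^∞ ∫₀^π sin θ/(t·sin θ + m(t·cos θ))² dθ dt < ∞`. -/
theorem statement10 (m : ℝ → ℝ)
    (h_even : ∀ x, m (-x) = m x) (h_pos : ∀ x, 0 < m x)
    (h_cont : Continuous m) (h_mono : AntitoneOn m (Set.Ici 0))
    (h_int : ∫⁻ t in Set.Ici (1 : ℝ), ENNReal.ofReal (negLog (m t) / t ^ 2) ≠ ⊤) :
    (∫⁻ t in Set.Ici (1 : ℝ), ∫⁻ θ in Set.Icc (0 : ℝ) Real.pi,
      ENNReal.ofReal (Real.sin θ / (t * Real.sin θ + m (t * Real.cos θ)) ^ 2)) ≠ ⊤ := by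

  have hm : Measurable m := h_cont.measurable
  have hlog1 : Measurable fun t : ℝ => Real.log (t + 1) :=
    Real.measurable_log.comp (measurable_id.add_const 1)
  have hneg : Measurable fun t : ℝ => negLog (m t) := by
    unfold negLog
    exact (Real.measurable_log.comp hm).neg.max measurable_const
  have hG : Measurable (fun t : ℝ =>
      ENNReal.ofReal (π * ((Real.log (t + 1) + negLog (m t)) / t ^ 2))) :=
    ENNReal.measurable_ofReal.comp
      (((hlog1.add hneg).div (measurable_id.pow_const 2)).const_mul π)
  have hf1 : Measurable (fun t : ℝ => ENNReal.ofReal (π * (Real.log (t + 1) / t ^ 2))) :=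
    ENNReal.measurable_ofReal.comp
      ((hlog1.div (measurable_id.pow_const 2)).const_mul π)
  have step : (∫⁻ t in Set.Ici (1 : ℝ), ∫⁻ θ in Set.Icc (0 : ℝ) Real.pi,
      ENNReal.ofReal (Real.sin θ / (t * Real.sin θ + m (t * Real.cos θ)) ^ 2)) ≤
      ∫⁻ t in Set.Ici (1 : ℝ),
        ENNReal.ofReal (π * ((Real.log (t + 1) + negLog (m t)) / t ^ 2)) :=
    setLIntegral_mono hG (fun t ht => inner_bound m h_even h_pos h_mono ht)
  have split2 : (∫⁻ t in Set.Ici (1 : ℝ),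
      ENNReal.ofReal (π * ((Real.log (t + 1) + negLog (m t)) / t ^ 2))) ≤
      (∫⁻ t in Set.Ici (1 : ℝ), ENNReal.ofReal (π * (Real.log (t + 1) / t ^ 2))) +
      ∫⁻ t in Set.Ici (1 : ℝ), ENNReal.ofReal (π * (negLog (m t) / t ^ 2)) := by
    rw [← lintegral_add_left hf1]
    apply lintegral_mono
    intro t
    dsimp only
    have h : π * ((Real.log (t + 1) + negLog (m t)) / t ^ 2) =
        π * (Real.log (t + 1) / t ^ 2) + π * (negLog (m t) / t ^ 2) := by ring
    rw [h]
    exact ENNReal.ofReal_add_le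
  have t1 : (∫⁻ t in Set.Ici (1 : ℝ), ENNReal.ofReal (π * (Real.log (t + 1) / t ^ 2))) ≠ ⊤ := by
    simp_rw [ENNReal.ofReal_mul Real.pi_pos.le]
    rw [lintegral_const_mul' _ _ ENNReal.ofReal_ne_top]
    exact ENNReal.mul_ne_top ENNReal.ofReal_ne_top logC
  have t2 : (∫⁻ t in Set.Ici (1 : ℝ), ENNReal.ofReal (π * (negLog (m t) / t ^ 2))) ≠ ⊤ := by
    simp_rw [ENNReal.ofReal_mul Real.pi_pos.le]
    rw [lintegral_const_mul' _ _ ENNReal.ofReal_ne_top]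
    exact ENNReal.mul_ne_top ENNReal.ofReal_ne_top h_int
  exact ne_top_of_le_ne_top (ENNReal.add_ne_top.2 ⟨t1, t2⟩) (step.trans split2)
end

section
/- Let m : ℝ → ℝ be an even, positive function that is non-increasing on [0,∞), and let W : ℂ → ℂ be a function that is holomorphic on ℍ(−m) and continuous on its closure, and such that: (i) Im W(t − i·m(t)) = 0 for every t ∈ ℝ (i.e. Im W vanishes on the boundary curve of ℍ(−m)); (ii) Re W(0) = 0; and (iii) W is Lipschitz with constant C > 0 on the closure of ℍ(−m). Then for every t ≥ 0 one has Im W(t) ≤ C · m(Re W(t)/C). -/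
/-- The domain `ℍ(−m) = {x + iy : y > −m(x)}`. -/
def Hm (m : ℝ → ℝ) : Set ℂ := {z : ℂ | -m z.re < z.im}

/-- Let `m` be even, positive and non-increasing on `[0, ∞)`, and let `W` be holomorphic on
`ℍ(−m)`, continuous on its closure, with `Im W = 0` on the boundary curve `{t − i·m(t)}`,
`Re W(0) = 0`, and Lipschitz with constant `C` on the closure of `ℍ(−m)`.  Then
`Im W(t) ≤ C·m(Re W(t)/C)` for every `t ≥ 0`. -/
theorem statement12 (m : ℝ → ℝ)
    (h_even : ∀ x, m (-x) = m x) (h_pos : ∀ x, 0 < m x)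
    (h_mono : AntitoneOn m (Set.Ici 0))
    (W : ℂ → ℂ)
    (hW_holo : DifferentiableOn ℂ W (Hm m))
    (hW_cont : ContinuousOn W (closure (Hm m)))
    (h_bdry : ∀ t : ℝ, (W ((t : ℂ) - (m t : ℂ) * Complex.I)).im = 0)
    (h_zero : (W 0).re = 0)
    (C : ℝ) (hC : 0 < C)
    (h_lip : ∀ z ∈ closure (Hm m), ∀ z' ∈ closure (Hm m), ‖W z - W z'‖ ≤ C * ‖z - z'‖) :
    ∀ t : ℝ, 0 ≤ t → (W (t : ℂ)).im ≤ C * m ((W (t : ℂ)).re / C) := by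
  intro t ht
  -- real points are in the closure
  have hreal : ∀ s : ℝ, (s : ℂ) ∈ closure (Hm m) := by
    intro s
    apply subset_closure
    show -m ((s : ℂ)).re < ((s : ℂ)).im
    simp only [Complex.ofReal_re, Complex.ofReal_im]
    linarith [h_pos s]
  -- the boundary point is in the closure
  have hbd : (t : ℂ) - (m t : ℂ) * Complex.I ∈ closure (Hm m) := by
    have hlim : Filter.Tendsto
        (fun n : ℕ => (t : ℂ) - (m t : ℂ) * Complex.I + ((1 / (n + 1) : ℝ) : ℂ) * Complex.I)
        Filter.atTop (nhds ((t : ℂ) - (m t : ℂ) * Complex.I)) := by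
      have h1 : Filter.Tendsto (fun n : ℕ => ((1 / (n + 1) : ℝ) : ℂ)) Filter.atTop (nhds 0) := by
        have : Filter.Tendsto (fun n : ℕ => 1 / ((n : ℝ) + 1)) Filter.atTop (nhds 0) :=
          tendsto_one_div_add_atTop_nhds_zero_nat
        exact (Complex.continuous_ofReal.tendsto 0).comp (by simpa using this)
      simpa using Filter.Tendsto.add
        (tendsto_const_nhds : Filter.Tendsto _ Filter.atTop
          (nhds ((t : ℂ) - (m t : ℂ) * Complex.I))) (h1.mul_const Complex.I)
    refine mem_closure_of_tendsto hlim (Filter.Eventually.of_forall fun n => ?_)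
    show -m (_ : ℂ).re < (_ : ℂ).im
    have hn : (0 : ℝ) < 1 / (n + 1) := by positivity
    simp only [Complex.add_re, Complex.add_im, Complex.sub_re, Complex.sub_im,
      Complex.mul_re, Complex.mul_im, Complex.ofReal_re, Complex.ofReal_im,
      Complex.I_re, Complex.I_im]
    ring_nf
    have h' : (0:ℝ) < ((1:ℝ) + n)⁻¹ := by positivity
    linarith
  -- first estimate : Im W(t) ≤ C * m t
  have key1 : (W (t : ℂ)).im ≤ C * m t := by
    have h1 : (W (t : ℂ)).im
        = (W (t : ℂ) - W ((t : ℂ) - (m t : ℂ) * Complex.I)).im := by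
      rw [Complex.sub_im, h_bdry t, sub_zero]
    have h2 : (W (t : ℂ) - W ((t : ℂ) - (m t : ℂ) * Complex.I)).im
        ≤ ‖W (t : ℂ) - W ((t : ℂ) - (m t : ℂ) * Complex.I)‖ :=
      (le_abs_self _).trans (Complex.abs_im_le_norm _)
    have h3 := h_lip _ (hreal t) _ hbd
    have h4 : ‖(t : ℂ) - ((t : ℂ) - (m t : ℂ) * Complex.I)‖ = m t := by
      rw [sub_sub_cancel]
      rw [norm_mul, Complex.norm_I, mul_one, Complex.norm_real,
        Real.norm_eq_abs, abs_of_pos (h_pos t)]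
    rw [h4] at h3
    linarith
  -- second estimate : |Re W(t)| ≤ C * t
  have key2 : |(W (t : ℂ)).re| ≤ C * t := by
    have h1 : (W (t : ℂ)).re = (W (t : ℂ) - W 0).re := by
      rw [Complex.sub_re, h_zero, sub_zero]
    have h2 : |(W (t : ℂ) - W 0).re| ≤ ‖W (t : ℂ) - W 0‖ := Complex.abs_re_le_norm _
    have h0 : (0 : ℂ) = ((0 : ℝ) : ℂ) := by norm_num
    have h3 := h_lip _ (hreal t) _ (h0 ▸ hreal 0)
    have h4 : ‖(t : ℂ) - 0‖ = t := by
      rw [sub_zero, Complex.norm_real, Real.norm_eq_abs, abs_of_nonneg ht]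
    rw [h4] at h3
    rw [h1]
    linarith
  -- put everything together
  set s := (W (t : ℂ)).re / C with hs
  have hst : |s| ≤ t := by
    rw [hs, abs_div, abs_of_pos hC, div_le_iff₀ hC]
    linarith [key2]
  have hms : m s = m |s| := by
    rcases le_or_gt 0 s with h | h
    · rw [abs_of_nonneg h]
    · rw [abs_of_neg h]; exact (h_even s).symm
  have hmono : m t ≤ m |s| :=
    h_mono (abs_nonneg s) ht hst
  calc (W (t : ℂ)).im ≤ C * m t := key1
    _ ≤ C * m |s| := by nlinarith
    _ = C * m s := by rw [hms]
end
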